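/- If H and K are finitely generated subgroups of G, then the intersection H ∩ K is a finitely generated subgroup of G. (In particular, the amalgamated free product of two finite groups has the Howson property.) -/

import Mathlib

set_option linter.unusedSectionVars false

open Pointwise Monoid Monoid.PushoutI Monoid.PushoutI.NormalWord Subgroup List

namespace HowsonAux

variable {ι : Type} [DecidableEq ι] {G : ι → Type} [∀ i, Group (G i)]
  [∀ i, DecidableEq (G i)] {A : Type} [Group A] {φ : ∀ i, A →* G i}
  (d : Transversal φ)

/-- map a syllable into the pushout -/
def lmap (p : Σ i, G i) : PushoutI φ := of p.1 p.2

/-- merged letter list of a normal word: the head is merged into the first syllable. -/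
def merged (w : NormalWord d) : List (PushoutI φ) :=
  match w.toList with
  | [] => [base φ w.head]
  | p :: rest => (base φ w.head * of p.1 p.2) :: rest.map lmap

/-- suffix products -/
def sfx (w : NormalWord d) (j : ℕ) : PushoutI φ := ((w.toList.drop j).map lmap).prod

noncomputable def nf (x : PushoutI φ) : NormalWord d := NormalWord.equiv x

noncomputable def cword (x : PushoutI φ) : List (PushoutI φ) := merged d (nf d x)

/-- prefix-product points of the canonical word of `x` -/
noncomputable def Px (x : PushoutI φ) : Set (PushoutI φ) :=
  {g | ∃ n, ((cword d x).take n).prod = g}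

theorem prod_nf (x : PushoutI φ) : (nf d x).prod = x :=
  NormalWord.equiv.symm_apply_apply x

theorem nf_prod (w : NormalWord d) : nf d w.prod = w :=
  NormalWord.equiv.apply_symm_apply w

theorem nf_eq_of_prod {w : NormalWord d} {x : PushoutI φ} (h : w.prod = x) :
    nf d x = w := by subst h; exact nf_prod d w

theorem prod_eq_base_mul (w : NormalWord d) :
    w.prod = base φ w.head * (w.toList.map lmap).prod := by
  rw [NormalWord.prod]
  congr 1
  rw [CoprodI.Word.prod, map_list_prod (ofCoprodI (φ := φ)), List.map_map]
  rfl

theorem merged_prod (w : NormalWord d) : (merged d w).prod = w.prod := by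
  rcases hw : w.toList with _ | ⟨p, rest⟩ <;>
    simp [merged, hw, prod_eq_base_mul d w, lmap, mul_assoc]

theorem merged_take (w : NormalWord d) (j : ℕ) (hj : 1 ≤ j) :
    ((merged d w).take j).prod = w.prod * (sfx d w j)⁻¹ := by
  obtain ⟨k, rfl⟩ : ∃ k, j = k + 1 := ⟨j - 1, (Nat.succ_pred_eq_of_pos hj).symm⟩
  rcases hw : w.toList with _ | ⟨p, rest⟩
  · simp [merged, hw, sfx, prod_eq_base_mul d w]
  · rw [merged, hw]
    simp only [List.take_succ_cons, List.prod_cons, sfx, hw, List.drop_succ_cons]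
    have h2 := List.prod_take_mul_prod_drop (rest.map (lmap (φ := φ))) k
    rw [prod_eq_base_mul d w, hw]
    simp only [List.map_cons, List.prod_cons, List.map_drop]
    rw [← h2, show lmap p = (PushoutI.of p.fst) p.snd from rfl]
    group

theorem mem_Px_iff {x p : PushoutI φ} :
    p ∈ Px d x ↔ p = 1 ∨ ∃ j, 1 ≤ j ∧ p = x * (sfx d (nf d x) j)⁻¹ := by
  constructor
  · rintro ⟨n, rfl⟩
    rcases Nat.eq_zero_or_pos n with rfl | hn
    · exact Or.inl (by simp)
    · refine Or.inr ⟨n, hn, ?_⟩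
      rw [cword, merged_take d _ n hn, prod_nf]
  · rintro (rfl | ⟨j, hj, rfl⟩)
    · exact ⟨0, by simp⟩
    · exact ⟨j, by rw [cword, merged_take d _ j hj, prod_nf]⟩

theorem one_mem_Px (x : PushoutI φ) : (1 : PushoutI φ) ∈ Px d x := ⟨0, by simp⟩

theorem self_mem_Px (x : PushoutI φ) : x ∈ Px d x := by
  refine ⟨(cword d x).length, ?_⟩
  rw [List.take_of_length_le le_rfl, cword, merged_prod, prod_nf]

/-- Left multiplication by a single letter changes the normal word only at the head:
the list of the result is the tail, or has the same tail, or prepends a letter. -/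
theorem nf_of_mul_cases (i : ι) (gi : G i) (w : NormalWord d) :
    (nf d (of i gi * w.prod)).toList = w.toList.tail ∨
    (∃ t : Σ i, G i, (nf d (of i gi * w.prod)).toList = t :: w.toList.tail) ∨
    (∃ t : Σ i, G i, (nf d (of i gi * w.prod)).toList = t :: w.toList) := by
  rcases hl : w.toList with _ | ⟨⟨j, t₁⟩, rest⟩
  · by_cases hr : gi * φ i w.head ∈ (φ i).range
    · obtain ⟨a', ha'⟩ := hr
      left
      have hw' : (⟨w.toWord, a', w.normalized⟩ : NormalWord d).prod
          = of i gi * w.prod := by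
        rw [prod_eq_base_mul, prod_eq_base_mul]
        show (base φ) a' * _ = _
        rw [← of_apply_eq_base φ i a', ha', ← of_apply_eq_base φ i w.head]
        simp [mul_assoc]
      rw [nf_eq_of_prod d hw']
      simp [hl]
    · have hgr : gi ∉ (φ i).range := by
        rintro ⟨b, rfl⟩
        exact hr ⟨b * w.head, by simp⟩
      have hmw : w.fstIdx ≠ some i := by
        simp [CoprodI.Word.fstIdx, hl]
      right; right
      rw [nf_eq_of_prod d (NormalWord.prod_cons gi w hmw hgr)]
      exact ⟨_, by rw [cons_toList, hl]⟩
  · by_cases hij : j = i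
    · subst hij
      -- the tail word
      have hne : ∀ l ∈ rest, Sigma.snd l ≠ 1 := fun l hl' =>
        w.ne_one l (by rw [hl]; exact List.mem_cons_of_mem _ hl')
      have hch : rest.Chain' fun l l' => Sigma.fst l ≠ Sigma.fst l' := by
        have := w.chain_ne
        rw [hl] at this
        exact this.tail
      have hnorm : ∀ i g, (⟨i, g⟩ : Σ i, G i) ∈ rest → g ∈ d.set i := fun i g hg =>
        w.normalized i g (by rw [hl]; exact List.mem_cons_of_mem _ hg)
      set wt : NormalWord d := ⟨⟨rest, hne, hch⟩, 1, hnorm⟩ with hwt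
      have hwtprod : wt.prod = (rest.map lmap).prod := by
        rw [prod_eq_base_mul]
        simp [hwt]
      have hwprod : w.prod = base φ w.head * lmap ⟨j, t₁⟩ * (rest.map lmap).prod := by
        rw [prod_eq_base_mul, hl]
        simp [mul_assoc]
      by_cases hr : gi * φ j w.head * t₁ ∈ (φ j).range
      · obtain ⟨a'', ha''⟩ := hr
        left
        have hw' : (⟨wt.toWord, a'', wt.normalized⟩ : NormalWord d).prod
            = of j gi * w.prod := by
          rw [prod_eq_base_mul]
          show (base φ) a'' * _ = _
          rw [hwprod, ← of_apply_eq_base φ j a'', ha'', ← of_apply_eq_base φ j w.head]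
          show _ * (rest.map lmap).prod = _
          simp [lmap, mul_assoc]
        rw [nf_eq_of_prod d hw']
        simp [hl, hwt]
      · have hgr : gi * φ j w.head * t₁ ∉ (φ j).range := hr
        have hmw : wt.fstIdx ≠ some j := by
          have hc := w.chain_ne
          rw [hl] at hc
          rcases rest with _ | ⟨⟨j', t'⟩, rest'⟩
          · simp [hwt, CoprodI.Word.fstIdx]
          · have : j ≠ j' := (List.isChain_cons_cons.1 hc).1
            simp [hwt, CoprodI.Word.fstIdx]
            exact fun h => this h.symm
        right; left
        have hw' : (cons (gi * φ j w.head * t₁) wt hmw hgr).prod = of j gi * w.prod := by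
          rw [NormalWord.prod_cons, hwtprod, hwprod]
          rw [← of_apply_eq_base φ j w.head]
          simp [lmap, mul_assoc]
        rw [nf_eq_of_prod d hw']
        exact ⟨_, by rw [cons_toList]; rfl⟩
    · by_cases hr : gi * φ i w.head ∈ (φ i).range
      · obtain ⟨a', ha'⟩ := hr
        right; left
        have hw' : (⟨w.toWord, a', w.normalized⟩ : NormalWord d).prod
            = of i gi * w.prod := by
          rw [prod_eq_base_mul, prod_eq_base_mul]
          show (base φ) a' * _ = _
          rw [← of_apply_eq_base φ i a', ha', ← of_apply_eq_base φ i w.head]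
          simp [mul_assoc]
        refine ⟨⟨j, t₁⟩, ?_⟩
        rw [nf_eq_of_prod d hw']
        simp [hl]
      · have hgr : gi ∉ (φ i).range := by
          rintro ⟨b, rfl⟩
          exact hr ⟨b * w.head, by simp⟩
        have hmw : w.fstIdx ≠ some i := by
          simp only [CoprodI.Word.fstIdx, hl]
          simp only [List.head?_cons, Option.map_some]
          exact fun h => hij (Option.some.inj h)
        right; right
        rw [nf_eq_of_prod d (NormalWord.prod_cons gi w hmw hgr)]
        exact ⟨_, by rw [cons_toList, hl]⟩

theorem sfx_congr {w₁ w₂ : NormalWord d} {j₁ j₂ : ℕ}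
    (h : w₁.toList.drop j₁ = w₂.toList.drop j₂) : sfx d w₁ j₁ = sfx d w₂ j₂ := by
  rw [sfx, sfx, h]

theorem drop_tail_eq {α : Type*} (l : List α) (k : ℕ) : l.tail.drop k = l.drop (k + 1) := by
  rw [← List.drop_one, List.drop_drop, Nat.add_comm]

/-- N1: prefix points of `of i gi * z` are `1` or close to `of i gi *` (prefix points of `z`). -/
theorem Px_letter_mul (i : ι) (gi : G i) (z : PushoutI φ) {p : PushoutI φ}
    (hp : p ∈ Px d (of i gi * z)) :
    p = 1 ∨ ∃ q ∈ Px d z, ∃ a : A, p = of i gi * (q * base φ a) := by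
  rcases (mem_Px_iff d).1 hp with rfl | ⟨j, hj, rfl⟩
  · exact Or.inl rfl
  right
  obtain ⟨k, rfl⟩ : ∃ k, j = k + 1 := ⟨j - 1, (Nat.succ_pred_eq_of_pos hj).symm⟩
  have hz : (nf d z).prod = z := prod_nf d z
  have hmulz : of i gi * z = of i gi * (nf d z).prod := by rw [hz]
  rcases nf_of_mul_cases d i gi (nf d z) with hc | ⟨t, hc⟩ | ⟨t, hc⟩ <;>
    rw [hmulz] at hp ⊢
  · -- result list is the tail
    have hs : sfx d (nf d (of i gi * (nf d z).prod)) (k + 1) = sfx d (nf d z) (k + 2) := by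
      apply sfx_congr
      rw [hc, drop_tail_eq]
    refine ⟨z * (sfx d (nf d z) (k + 2))⁻¹, ?_, 1, ?_⟩
    · exact (mem_Px_iff d).2 (Or.inr ⟨k + 2, by omega, rfl⟩)
    · rw [hs, hz]
      simp [mul_assoc]
  · -- result list is t :: tail
    have hs : sfx d (nf d (of i gi * (nf d z).prod)) (k + 1) = sfx d (nf d z) (k + 1) := by
      apply sfx_congr
      rw [hc, List.drop_succ_cons, drop_tail_eq]
    refine ⟨z * (sfx d (nf d z) (k + 1))⁻¹, ?_, 1, ?_⟩
    · exact (mem_Px_iff d).2 (Or.inr ⟨k + 1, by omega, rfl⟩)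
    · rw [hs, hz]
      simp [mul_assoc]
  · -- result list is t :: whole list
    rcases Nat.eq_zero_or_pos k with rfl | hk
    · -- j = 1 : the new junction point
      have hs : sfx d (nf d (of i gi * (nf d z).prod)) 1
          = (((nf d z).toList).map lmap).prod := by
        rw [sfx, hc, List.drop_succ_cons, List.drop_zero]
      refine ⟨1, one_mem_Px d z, (nf d z).head, ?_⟩
      have hthis := prod_eq_base_mul d (nf d z)
      rw [hz] at hthis
      have h2 : z * ((List.map lmap (nf d z).toList).prod)⁻¹ = base φ (nf d z).head := by
        nth_rewrite 1 [hthis]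
        group
      rw [hs, hz, mul_assoc, h2]
      simp
    · obtain ⟨m, rfl⟩ : ∃ m, k = m + 1 := ⟨k - 1, (Nat.succ_pred_eq_of_pos hk).symm⟩
      have hs : sfx d (nf d (of i gi * (nf d z).prod)) (m + 2) = sfx d (nf d z) (m + 1) := by
        apply sfx_congr
        rw [hc, List.drop_succ_cons]
      refine ⟨z * (sfx d (nf d z) (m + 1))⁻¹, ?_, 1, ?_⟩
      · exact (mem_Px_iff d).2 (Or.inr ⟨m + 1, by omega, rfl⟩)
      · rw [hs, hz]
        simp [mul_assoc]

/-- Peel the first letter off the canonical form of `x`. -/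
theorem exists_letter_decomp (x : PushoutI φ) (hne : (nf d x).toList ≠ []) :
    ∃ (i : ι) (gi : G i) (x' : PushoutI φ),
      x = of i gi * x' ∧
      (nf d x').toList.length < (nf d x).toList.length ∧
      (∀ q ∈ Px d x', of i gi * q ∈ Px d x) := by
  rcases hl : (nf d x).toList with _ | ⟨⟨j, t₁⟩, rest⟩
  · exact absurd hl hne
  have hne1 : ∀ l ∈ rest, Sigma.snd l ≠ 1 := fun l hl' =>
    (nf d x).ne_one l (by rw [hl]; exact List.mem_cons_of_mem _ hl')
  have hch : rest.Chain' fun l l' => Sigma.fst l ≠ Sigma.fst l' := by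
    have := (nf d x).chain_ne
    rw [hl] at this
    exact this.tail
  have hnorm : ∀ i g, (⟨i, g⟩ : Σ i, G i) ∈ rest → g ∈ d.set i := fun i g hg =>
    (nf d x).normalized i g (by rw [hl]; exact List.mem_cons_of_mem _ hg)
  set wt : NormalWord d := ⟨⟨rest, hne1, hch⟩, 1, hnorm⟩ with hwt
  have hwtprod : wt.prod = (rest.map lmap).prod := by
    rw [prod_eq_base_mul]
    simp [hwt]
  have hnf' : nf d wt.prod = wt := nf_prod d wt
  have hxprod : x = base φ (nf d x).head * lmap ⟨j, t₁⟩ * (rest.map lmap).prod := by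
    conv_lhs => rw [← prod_nf d x]
    rw [prod_eq_base_mul, hl]
    simp [mul_assoc]
  refine ⟨j, φ j (nf d x).head * t₁, wt.prod, ?_, ?_, ?_⟩
  · rw [map_mul, of_apply_eq_base φ j, hwtprod]
    exact hxprod
  · rw [hnf']
    exact Nat.lt_succ_self _
  · intro q hq
    rcases (mem_Px_iff d).1 hq with rfl | ⟨k, hk, rfl⟩
    · -- the junction point
      have hs : sfx d (nf d x) 1 = (rest.map lmap).prod := by
        rw [sfx, hl, List.drop_succ_cons, List.drop_zero]
      refine (mem_Px_iff d).2 (Or.inr ⟨1, le_refl 1, ?_⟩)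
      rw [hs]
      set h0 := (nf d x).head with hh0
      rw [mul_one, map_mul, of_apply_eq_base φ j, hxprod,
        show lmap ⟨j, t₁⟩ = of j t₁ from rfl]
      try group
    · have hs : sfx d (nf d wt.prod) k = sfx d (nf d x) (k + 1) := by
        apply sfx_congr
        rw [hnf', hl, List.drop_succ_cons]
      refine (mem_Px_iff d).2 (Or.inr ⟨k + 1, by omega, ?_⟩)
      rw [hs, hwtprod]
      set h0 := (nf d x).head with hh0
      set s := sfx d (nf d x) (k + 1) with hss
      rw [map_mul, of_apply_eq_base φ j, hxprod,
        show lmap ⟨j, t₁⟩ = of j t₁ from rfl]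
      group

/-- KEY: prefix points of a product lie close to prefix points of the factors. -/
theorem Px_mul [Nonempty ι] :
    ∀ (n : ℕ) (x y p : PushoutI φ), (nf d x).toList.length = n → p ∈ Px d (x * y) →
    (∃ q ∈ Px d x, ∃ a : A, p = q * base φ a) ∨
    (∃ q ∈ Px d y, ∃ a : A, p = x * (q * base φ a)) := by
  intro n
  induction n using Nat.strong_induction_on with
  | _ n ih =>
    intro x y p hn hp
    rcases Nat.eq_zero_or_pos n with rfl | hpos
    · -- x = base φ a₀
      have hl : (nf d x).toList = [] := List.eq_nil_of_length_eq_zero hn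
      have hx : x = base φ (nf d x).head := by
        conv_lhs => rw [← prod_nf d x]
        rw [prod_eq_base_mul, hl]
        simp
      obtain ⟨i₀⟩ := ‹Nonempty ι›
      have hx2 : x = of i₀ (φ i₀ (nf d x).head) := by rw [of_apply_eq_base]; exact hx
      rw [hx2] at hp
      rcases Px_letter_mul d i₀ _ y hp with rfl | ⟨q, hq, a, rfl⟩
      · exact Or.inl ⟨1, one_mem_Px d x, 1, by simp⟩
      · exact Or.inr ⟨q, hq, a, by rw [← hx2]⟩
    · have hne : (nf d x).toList ≠ [] := by
        intro h
        rw [h] at hn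
        simp at hn
        omega
      obtain ⟨i, gi, x', hdecomp, hlen, hmap⟩ := exists_letter_decomp d x hne
      rw [hdecomp, mul_assoc] at hp
      rcases Px_letter_mul d i gi (x' * y) hp with rfl | ⟨q₁, hq₁, a₁, rfl⟩
      · exact Or.inl ⟨1, one_mem_Px d x, 1, by simp⟩
      · rcases ih _ (hn ▸ hlen) x' y q₁ rfl hq₁ with ⟨q₂, hq₂, a₂, rfl⟩ | ⟨q₃, hq₃, a₃, rfl⟩
        · refine Or.inl ⟨of i gi * q₂, hmap q₂ hq₂, a₂ * a₁, ?_⟩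
          rw [map_mul]
          group
        · refine Or.inr ⟨q₃, hq₃, a₃ * a₁, ?_⟩
          rw [hdecomp, map_mul]
          group

theorem cword_prod (x : PushoutI φ) : (cword d x).prod = x := by
  rw [cword, merged_prod, prod_nf]

theorem Px_finite (x : PushoutI φ) : (Px d x).Finite := by
  apply Set.Finite.subset
    (Set.Finite.image (fun n => ((cword d x).take n).prod)
      (Set.finite_Iic (cword d x).length))
  rintro p ⟨n, rfl⟩
  by_cases h : n ≤ (cword d x).length
  · exact ⟨n, h, rfl⟩
  · refine ⟨(cword d x).length, Set.mem_Iic.2 le_rfl, ?_⟩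
    show (List.take (cword d x).length (cword d x)).prod = _
    rw [List.take_of_length_le le_rfl, List.take_of_length_le (by omega : (cword d x).length ≤ n)]

variable (φ) in
/-- the finite alphabet -/
def SG : Set (PushoutI φ) := ⋃ i, Set.range (of (φ := φ) i)

variable (φ) in
/-- the finite correction subgroup (image of the base group) -/
def Cb : Set (PushoutI φ) := Set.range (base φ)

theorem SG_finite [Finite ι] [∀ i, Finite (G i)] : (SG φ).Finite :=
  Set.finite_iUnion fun i => Set.finite_range _

theorem Cb_finite [Finite A] : (Cb φ).Finite := Set.finite_range _

theorem cword_letters [Nonempty ι] (x : PushoutI φ) : ∀ ℓ ∈ cword d x, ℓ ∈ SG φ := by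
  intro ℓ hℓ
  rw [cword, merged] at hℓ
  rcases hl : (nf d x).toList with _ | ⟨p, rest⟩ <;> rw [hl] at hℓ
  · obtain ⟨i₀⟩ := ‹Nonempty ι›
    simp only [List.mem_singleton] at hℓ
    subst hℓ
    exact Set.mem_iUnion.2 ⟨i₀, ⟨φ i₀ (nf d x).head, of_apply_eq_base φ i₀ _⟩⟩
  · rcases List.mem_cons.1 hℓ with rfl | hmem
    · refine Set.mem_iUnion.2 ⟨p.1, ⟨φ p.1 (nf d x).head * p.2, ?_⟩⟩
      rw [map_mul, of_apply_eq_base φ p.1]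
      try rfl
    · obtain ⟨q, _, rfl⟩ := List.mem_map.1 hmem
      exact Set.mem_iUnion.2 ⟨q.1, ⟨q.2, rfl⟩⟩

/-- quasiconvexity (wrt canonical prefix points) of a subgroup with a given finite gauge -/
def QC (M : Subgroup (PushoutI φ)) (F : Set (PushoutI φ)) : Prop :=
  ∀ m ∈ M, ∀ p ∈ Px d m, ∃ m' ∈ M, ∃ f ∈ F, p = m' * f

theorem qc_of_fg [Nonempty ι] [Finite A] {M : Subgroup (PushoutI φ)} (h : M.FG) :
    ∃ F : Set (PushoutI φ), F.Finite ∧ QC d M F := by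
  obtain ⟨S, hScl, hSfin⟩ := (Subgroup.fg_iff M).1 h
  set F₀ : Set (PushoutI φ) := Px d 1 ∪ ⋃ s ∈ S ∪ S⁻¹, Px d s with hF₀
  have hF₀fin : F₀.Finite :=
    (Px_finite d 1).union (Set.Finite.biUnion (hSfin.union hSfin.inv)
      fun s _ => Px_finite d s)
  refine ⟨F₀ * Cb φ, hF₀fin.mul (Cb_finite), ?_⟩
  have hFmul : ∀ f ∈ F₀ * Cb φ, ∀ a : A, f * base φ a ∈ F₀ * Cb φ := by
    rintro f ⟨f₀, hf₀, c, ⟨b, rfl⟩, rfl⟩ a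
    exact ⟨f₀, hf₀, base φ b * base φ a, ⟨b * a, by rw [map_mul]⟩, by group⟩
  have hmemM : ∀ s ∈ S ∪ S⁻¹, s ∈ M := by
    intro s hs
    rcases hs with hs | hs
    · exact hScl ▸ Subgroup.subset_closure hs
    · rw [← inv_inv s]
      exact M.inv_mem (hScl ▸ Subgroup.subset_closure (Set.mem_inv.1 hs))
  have main : ∀ l : List (PushoutI φ), (∀ g ∈ l, g ∈ S ∪ S⁻¹) →
      ∀ p ∈ Px d l.prod, ∃ m' ∈ M, ∃ f ∈ F₀ * Cb φ, p = m' * f := by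
    intro l
    induction l using List.reverseRecOn with
    | nil =>
      intro _ p hp
      refine ⟨1, M.one_mem, p * base φ 1, ?_, by simp⟩
      exact ⟨p, Or.inl (by simpa using hp), base φ 1, ⟨1, rfl⟩, rfl⟩
    | append_singleton l s ih =>
      intro hmem p hp
      rw [List.prod_append, List.prod_singleton] at hp
      rcases Px_mul d _ l.prod s p rfl hp with ⟨q, hq, a, rfl⟩ | ⟨q, hq, a, rfl⟩
      · obtain ⟨m', hm', f, hf, rfl⟩ := ih (fun g hg => hmem g (List.mem_append_left _ hg)) q hq
        exact ⟨m', hm', f * base φ a, hFmul f hf a, by rw [mul_assoc]⟩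
      · refine ⟨l.prod, M.list_prod_mem
          (fun g hg => hmemM g (hmem g (List.mem_append_left _ hg))), q * base φ a, ?_, rfl⟩
        refine ⟨q, Or.inr ?_, base φ a, ⟨a, rfl⟩, rfl⟩
        have hsmem : s ∈ S ∪ S⁻¹ := hmem s (by simp)
        exact Set.mem_biUnion hsmem hq
  intro m hm p hp
  have hm' : m ∈ Submonoid.closure (S ∪ S⁻¹) := by
    rw [← Subgroup.closure_toSubmonoid, hScl]
    exact hm
  obtain ⟨l, hl, rfl⟩ := Submonoid.exists_list_of_mem_closure hm'
  exact main l hl p hp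

theorem qc_inf {H K : Subgroup (PushoutI φ)} {F₁ F₂ : Set (PushoutI φ)}
    (h₁fin : F₁.Finite) (h₂fin : F₂.Finite) (h₁ : QC d H F₁) (h₂ : QC d K F₂) :
    ∃ F : Set (PushoutI φ), F.Finite ∧ QC d (H ⊓ K) F := by
  classical
  set ψ : PushoutI φ × PushoutI φ → PushoutI φ := fun q =>
    if h : ∃ x : PushoutI φ, (∃ hh ∈ H, x = hh * q.1) ∧ (∃ kk ∈ K, x = kk * q.2)
    then h.choose else 1 with hψ
  refine ⟨ψ '' (F₁ ×ˢ F₂), (h₁fin.prod h₂fin).image _, ?_⟩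
  intro m hm p hp
  obtain ⟨h, hhH, f₁, hf₁, hp₁⟩ := h₁ m hm.1 p hp
  obtain ⟨k, hkK, f₂, hf₂, hp₂⟩ := h₂ m hm.2 p hp
  have hex : ∃ x : PushoutI φ, (∃ hh ∈ H, x = hh * f₁) ∧ (∃ kk ∈ K, x = kk * f₂) :=
    ⟨p, ⟨h, hhH, hp₁⟩, ⟨k, hkK, hp₂⟩⟩
  have hx₀ := hex.choose_spec
  set x₀ := hex.choose with hx₀def
  obtain ⟨⟨h₀, hh₀, hxh⟩, ⟨k₀, hk₀, hxk⟩⟩ := hx₀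
  refine ⟨p * x₀⁻¹, ⟨?_, ?_⟩, x₀, ?_, by group⟩
  · have hpx : p * x₀⁻¹ = h * h₀⁻¹ := by rw [hp₁, hxh]; group
    rw [hpx]
    exact H.mul_mem hhH (H.inv_mem hh₀)
  · have hpx : p * x₀⁻¹ = k * k₀⁻¹ := by rw [hp₂, hxk]; group
    rw [hpx]
    exact K.mul_mem hkK (K.inv_mem hk₀)
  · refine ⟨(f₁, f₂), Set.mk_mem_prod hf₁ hf₂, ?_⟩
    rw [hψ]
    simp only [dif_pos hex]
    rfl

theorem fg_of_qc [Nonempty ι] [Finite ι] [∀ i, Finite (G i)]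
    {M : Subgroup (PushoutI φ)} {F : Set (PushoutI φ)} (hFfin : F.Finite)
    (hqc : QC d M F) : M.FG := by
  set T : Set (PushoutI φ) := (M : Set (PushoutI φ)) ∩ (F⁻¹ ∪ F ∪ F * SG φ * F⁻¹) with hT
  have hTM : T ⊆ (M : Set (PushoutI φ)) := Set.inter_subset_left
  have hTfin : T.Finite :=
    Set.Finite.subset (hFfin.inv.union hFfin |>.union ((hFfin.mul SG_finite).mul hFfin.inv))
      Set.inter_subset_right
  have core : ∀ l : List (PushoutI φ), (∀ g ∈ l, g ∈ SG φ) →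
      (∀ n : ℕ, ∃ m ∈ M, ∃ f ∈ F, (l.take n).prod = m * f) →
      ∀ m ∈ M, ∀ f ∈ F, l.prod = m * f → m ∈ Subgroup.closure T := by
    intro l
    induction l using List.reverseRecOn with
    | nil =>
      intro _ _ m hmM f hf hprod
      have : m = f⁻¹ := by
        rw [List.prod_nil] at hprod
        rw [eq_inv_iff_mul_eq_one, ← hprod]
      apply Subgroup.subset_closure
      refine ⟨hmM, Or.inl (Or.inl ?_)⟩
      rw [this]
      exact Set.inv_mem_inv.2 hf
    | append_singleton l σ ih =>
      intro hsig hpre m hmM f hf hprod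
      obtain ⟨m₁, hm₁M, f₁, hf₁, hm₁f₁⟩ := hpre l.length
      rw [List.take_left] at hm₁f₁
      have hm₁cl : m₁ ∈ Subgroup.closure T := by
        refine ih (fun g hg => hsig g (List.mem_append_left _ hg)) ?_ m₁ hm₁M f₁ hf₁ hm₁f₁
        intro n
        by_cases hn : n ≤ l.length
        · obtain ⟨m₂, hm₂, f₂, hf₂, h₂⟩ := hpre n
          rw [List.take_append_of_le_length hn] at h₂
          exact ⟨m₂, hm₂, f₂, hf₂, h₂⟩
        · exact ⟨m₁, hm₁M, f₁, hf₁, by rw [List.take_of_length_le (by omega)]; exact hm₁f₁⟩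
      have hquot : m₁⁻¹ * m ∈ Subgroup.closure T := by
        apply Subgroup.subset_closure
        refine ⟨M.mul_mem (M.inv_mem hm₁M) hmM, Or.inr ?_⟩
        have : m₁⁻¹ * m = f₁ * σ * f⁻¹ := by
          have hp2 : l.prod * σ = m * f := by
            rw [← hprod, List.prod_append, List.prod_singleton]
          have hp3 : l.prod = m₁ * f₁ := hm₁f₁
          rw [hp3] at hp2
          have h4 : m = m₁ * f₁ * σ * f⁻¹ := (mul_inv_eq_iff_eq_mul.2 hp2).symm
          rw [h4]
          group
        rw [this]
        exact ⟨f₁ * σ, ⟨f₁, hf₁, σ, hsig σ (by simp), rfl⟩, f⁻¹, Set.inv_mem_inv.2 hf, rfl⟩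
      have := Subgroup.mul_mem _ hm₁cl hquot
      rwa [mul_inv_cancel_left] at this
  have hMT : M = Subgroup.closure T := by
    refine le_antisymm ?_ ((Subgroup.closure_le M).2 hTM)
    intro m hm
    obtain ⟨m'', hm''M, f'', hf'', hfull⟩ := hqc m hm m (self_mem_Px d m)
    have hm''cl : m'' ∈ Subgroup.closure T := by
      refine core (cword d m) (cword_letters d m) ?_ m'' hm''M f'' hf'' ?_
      · intro n
        exact hqc m hm _ ⟨n, rfl⟩
      · rw [cword_prod]
        exact hfull
    have hf''T : m''⁻¹ * m ∈ Subgroup.closure T := by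
      apply Subgroup.subset_closure
      refine ⟨M.mul_mem (M.inv_mem hm''M) hm, Or.inl (Or.inr ?_)⟩
      have : m''⁻¹ * m = f'' := by rw [hfull]; group
      rwa [this]
    have := Subgroup.mul_mem _ hm''cl hf''T
    rwa [mul_inv_cancel_left] at this
  rw [Subgroup.fg_iff]
  exact ⟨T, hMT.symm, hTfin⟩

end HowsonAux

open Monoid

/-- **Howson property for amalgams of finite groups.**
If `G = G₁ *_A G₂` is an amalgamated free product (pushout) of finite groups `G₁, G₂`
along injective homomorphisms `φ i : A →* G i`, then the intersection of two finitely
generated subgroups of `G` is finitely generated. -/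
theorem howson_property_amalgam_of_finite
    (A : Type) [Group A] (Gf : Bool → Type) [∀ i, Group (Gf i)] [∀ i, Finite (Gf i)]
    (φ : ∀ i : Bool, A →* Gf i) (hφ : ∀ i, Function.Injective (φ i))
    (H K : Subgroup (PushoutI φ)) (hH : H.FG) (hK : K.FG) :
    (H ⊓ K).FG := by
  classical
  haveI : Finite A := Finite.of_injective (φ true) (hφ true)
  obtain ⟨d⟩ := Monoid.PushoutI.NormalWord.transversal_nonempty φ hφ
  obtain ⟨F₁, hF₁fin, hqc₁⟩ := HowsonAux.qc_of_fg d hH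
  obtain ⟨F₂, hF₂fin, hqc₂⟩ := HowsonAux.qc_of_fg d hK
  obtain ⟨F, hFfin, hqc⟩ := HowsonAux.qc_inf d hF₁fin hF₂fin hqc₁ hqc₂
  exact HowsonAux.fg_of_qc d hFfin hqc
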